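/- Let A and B be n×n complex matrices that are Hermitian, and suppose ‖A‖ ≤ 1, where ‖·‖ denotes the ℓ²→ℓ² operator norm. Then ‖exp(iA)·B·exp(−iA) − B − i(AB − BA)‖ ≤ ‖A(AB−BA) − (AB−BA)A‖ · (e² − 3)/4. -/

import Mathlib

open scoped Matrix.Norms.L2Operator

open NormedSpace ContinuousLinearMap Nat

section Aux

variable {𝔸 : Type*} [NormedRing 𝔸] [NormedAlgebra ℂ 𝔸] [CompleteSpace 𝔸]

set_option linter.unusedSectionVars false

private lemma mulL_pow_apply (X : 𝔸) (k : ℕ) (B : 𝔸) :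
    ((ContinuousLinearMap.mul ℂ 𝔸 X) ^ k) B = X ^ k * B := by
  induction k generalizing B with
  | zero => simp
  | succ k ih =>
      simp only [pow_succ, ContinuousLinearMap.mul_apply, mul_apply', ih, mul_assoc]

private lemma mulR_pow_apply (X : 𝔸) (k : ℕ) (B : 𝔸) :
    (((ContinuousLinearMap.mul ℂ 𝔸).flip X) ^ k) B = B * X ^ k := by
  induction k generalizing B with
  | zero => simp
  | succ k ih =>
      simp only [pow_succ, ContinuousLinearMap.mul_apply, flip_apply, mul_apply', ih]
      rw [mul_assoc, pow_mul_comm']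

private lemma exp_mulL_apply (X B : 𝔸) :
    exp (ContinuousLinearMap.mul ℂ 𝔸 X) B = exp X * B := by
  have h1 := (exp_series_hasSum_exp' (𝕂 := ℂ) (ContinuousLinearMap.mul ℂ 𝔸 X)).mapL
    (ContinuousLinearMap.apply ℂ 𝔸 B)
  have h2 := (exp_series_hasSum_exp' (𝕂 := ℂ) X).mapL ((ContinuousLinearMap.mul ℂ 𝔸).flip B)
  simp only [map_smul, ContinuousLinearMap.apply_apply, mulL_pow_apply, flip_apply,
    mul_apply'] at h1 h2
  exact h1.unique (by simpa [smul_mul_assoc] using h2)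

private lemma exp_mulR_apply (X B : 𝔸) :
    exp ((ContinuousLinearMap.mul ℂ 𝔸).flip X) B = B * exp X := by
  have h1 := (exp_series_hasSum_exp' (𝕂 := ℂ) ((ContinuousLinearMap.mul ℂ 𝔸).flip X)).mapL
    (ContinuousLinearMap.apply ℂ 𝔸 B)
  have h2 := (exp_series_hasSum_exp' (𝕂 := ℂ) X).mapL (ContinuousLinearMap.mul ℂ 𝔸 B)
  simp only [map_smul, ContinuousLinearMap.apply_apply, mulR_pow_apply, mul_apply'] at h1 h2
  exact h1.unique (by simpa [mul_smul_comm] using h2)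

private lemma aux_bound (X B : 𝔸) (hX : ‖X‖ ≤ 1) :
    ‖exp X * B * exp (-X) - B - (X * B - B * X)‖
      ≤ ‖X * (X * B - B * X) - (X * B - B * X) * X‖ * ((Real.exp 1 ^ 2 - 3) / 4) := by
  set L : 𝔸 →L[ℂ] 𝔸 := ContinuousLinearMap.mul ℂ 𝔸 X with hL
  set R : 𝔸 →L[ℂ] 𝔸 := (ContinuousLinearMap.mul ℂ 𝔸).flip X with hR
  set T : 𝔸 →L[ℂ] 𝔸 := L - R with hT
  have hTapp : ∀ C : 𝔸, T C = X * C - C * X := by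
    intro C
    simp [hT, hL, hR, ContinuousLinearMap.sub_apply]
  set D : 𝔸 := X * (X * B - B * X) - (X * B - B * X) * X with hD
  have hT2 : (T ^ 2) B = D := by
    rw [pow_two, ContinuousLinearMap.mul_apply, hTapp, hTapp]
  have hcomm : Commute L (-R) := by
    show L * -R = -R * L
    ext C
    simp [hL, hR, ContinuousLinearMap.mul_apply, mul_assoc]
  have hexpT : exp T B = exp X * B * exp (-X) := by
    have hsplit : exp T = exp L * exp (-R) := by
      rw [hT, sub_eq_add_neg]
      letI : NormedAlgebra ℚ (𝔸 →L[ℂ] 𝔸) := NormedAlgebra.restrictScalars ℚ ℂ (𝔸 →L[ℂ] 𝔸)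
      exact exp_add_of_commute hcomm
    have hnegR : -R = (ContinuousLinearMap.mul ℂ 𝔸).flip (-X) := by
      rw [map_neg]
    rw [hsplit, ContinuousLinearMap.mul_apply, hnegR, exp_mulR_apply, hL, exp_mulL_apply,
      mul_assoc]
  have hnormT : ‖T‖ ≤ 2 := by
    calc ‖T‖ ≤ ‖L‖ + ‖R‖ := norm_sub_le _ _
      _ ≤ ‖X‖ + ‖X‖ := by
          gcongr
          · exact opNorm_mul_apply_le ℂ 𝔸 X
          · exact opNorm_le_bound _ (norm_nonneg X) fun C => by
              simpa [hR, mul_comm] using norm_mul_le C X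
      _ ≤ 2 := by linarith
  have hpow : ∀ (k : ℕ) (C : 𝔸), ‖(T ^ k) C‖ ≤ 2 ^ k * ‖C‖ := by
    intro k
    induction k with
    | zero => intro C; simp
    | succ k ih =>
        intro C
        have h1 : (T ^ (k + 1)) C = (T ^ k) (T C) := by
          simp only [pow_succ, ContinuousLinearMap.mul_apply]
        have h2 : ‖T C‖ ≤ 2 * ‖C‖ :=
          (le_opNorm T C).trans (mul_le_mul_of_nonneg_right hnormT (norm_nonneg C))
        calc ‖(T ^ (k + 1)) C‖ = ‖(T ^ k) (T C)‖ := by rw [h1]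
          _ ≤ 2 ^ k * ‖T C‖ := ih _
          _ ≤ 2 ^ k * (2 * ‖C‖) := by
              apply mul_le_mul_of_nonneg_left h2 (by positivity)
          _ = 2 ^ (k + 1) * ‖C‖ := by ring
  have hsum : HasSum (fun n : ℕ => ((n ! : ℂ)⁻¹) • ((T ^ n) B)) (exp T B) := by
    have h1 := (exp_series_hasSum_exp' (𝕂 := ℂ) T).mapL (ContinuousLinearMap.apply ℂ 𝔸 B)
    simpa using h1
  have hf0 : ((0 ! : ℂ)⁻¹) • ((T ^ 0) B) = B := by simp
  have hf1 : ((1 ! : ℂ)⁻¹) • ((T ^ 1) B) = X * B - B * X := by simp [hTapp]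
  have hrem : HasSum (fun n : ℕ => (((n + 2)! : ℂ)⁻¹) • ((T ^ (n + 2)) B))
      (exp X * B * exp (-X) - B - (X * B - B * X)) := by
    have h := (hasSum_nat_add_iff' (f := fun n : ℕ => ((n ! : ℂ)⁻¹) • ((T ^ n) B)) 2).mpr hsum
    rw [Finset.sum_range_succ, Finset.sum_range_one, hf0, hf1, hexpT] at h
    simpa [sub_sub] using h
  have hreal : HasSum (fun n : ℕ => (2 : ℝ) ^ n / (n + 2)!) ((Real.exp 1 ^ 2 - 3) / 4) := by
    have he : HasSum (fun n : ℕ => (2 : ℝ) ^ n / n !) (Real.exp 2) := by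
      simpa [Real.exp_eq_exp_ℝ] using expSeries_div_hasSum_exp (2 : ℝ)
    have hshift := (hasSum_nat_add_iff' (f := fun n : ℕ => (2 : ℝ) ^ n / n !) 2).mpr he
    rw [Finset.sum_range_succ, Finset.sum_range_one] at hshift
    have hval : Real.exp 2 - ((2 : ℝ) ^ 0 / (0 ! : ℕ) + (2 : ℝ) ^ 1 / (1 ! : ℕ))
        = Real.exp 1 ^ 2 - 3 := by
      have h : Real.exp 1 ^ 2 = Real.exp 2 := by
        rw [← Real.exp_nat_mul]; norm_num
      rw [← h]
      norm_num [Nat.factorial]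
    rw [hval] at hshift
    have h4 := hshift.div_const 4
    have hfun : (fun n : ℕ => (2 : ℝ) ^ (n + 2) / (n + 2)! / 4)
        = fun n : ℕ => (2 : ℝ) ^ n / (n + 2)! := by
      funext m
      rw [pow_add]
      ring
    rw [hfun] at h4
    exact h4
  have hbound : ∀ n : ℕ, ‖(((n + 2)! : ℂ)⁻¹) • ((T ^ (n + 2)) B)‖
      ≤ ‖D‖ * ((2 : ℝ) ^ n / (n + 2)!) := by
    intro n
    have h1 : (T ^ (n + 2)) B = (T ^ n) ((T ^ 2) B) := by
      rw [← ContinuousLinearMap.mul_apply, ← pow_add]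
    rw [norm_smul, h1, hT2]
    have h2 : ‖((n + 2)! : ℂ)⁻¹‖ = (((n + 2)! : ℕ) : ℝ)⁻¹ := by
      rw [norm_inv, Complex.norm_natCast]
    rw [h2]
    have h3 : ‖(T ^ n) D‖ ≤ 2 ^ n * ‖D‖ := hpow n D
    rw [div_eq_mul_inv]
    calc (((n + 2)! : ℕ) : ℝ)⁻¹ * ‖(T ^ n) D‖
        ≤ (((n + 2)! : ℕ) : ℝ)⁻¹ * (2 ^ n * ‖D‖) := by
          apply mul_le_mul_of_nonneg_left h3 (by positivity)
      _ = ‖D‖ * ((2 : ℝ) ^ n * (((n + 2)! : ℕ) : ℝ)⁻¹) := by ring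
  calc ‖exp X * B * exp (-X) - B - (X * B - B * X)‖
      = ‖∑' n : ℕ, (((n + 2)! : ℂ)⁻¹) • ((T ^ (n + 2)) B)‖ := by rw [hrem.tsum_eq]
    _ ≤ ‖D‖ * ((Real.exp 1 ^ 2 - 3) / 4) :=
        tsum_of_norm_bounded (hreal.mul_left ‖D‖) hbound

end Aux

theorem conjugation_perturbation_bound {n : ℕ}
    (A B : Matrix (Fin n) (Fin n) ℂ)
    (hA : A.IsHermitian) (hB : B.IsHermitian) (hAnorm : ‖A‖ ≤ 1) :
    ‖NormedSpace.exp (Complex.I • A) * B * NormedSpace.exp (-(Complex.I • A))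
        - B - Complex.I • (A * B - B * A)‖
      ≤ ‖A * (A * B - B * A) - (A * B - B * A) * A‖ * ((Real.exp 1 ^ 2 - 3) / 4) := by
  have hX : ‖Complex.I • A‖ ≤ 1 := by
    rw [norm_smul, Complex.norm_I, one_mul]; exact hAnorm
  have key := aux_bound (Complex.I • A) B hX
  have e1 : (Complex.I • A) * B - B * (Complex.I • A) = Complex.I • (A * B - B * A) := by
    rw [smul_mul_assoc, mul_smul_comm, smul_sub]
  have e2 : (Complex.I • A) * (Complex.I • (A * B - B * A))
      - (Complex.I • (A * B - B * A)) * (Complex.I • A)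
      = -(A * (A * B - B * A) - (A * B - B * A) * A) := by
    rw [smul_mul_assoc, mul_smul_comm, smul_smul, smul_mul_assoc, mul_smul_comm, smul_smul,
      Complex.I_mul_I, ← smul_sub, neg_one_smul]
  rw [e1, e2, norm_neg] at key
  exact key
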